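/- There exists a constant C > 0 such that for every real number r ≥ 2 and every positive integer N, with r_i = r^{2^{i−1}}: ∑_{i=1}^{N} i · r_i^{−1/2} (log₂ r_i)² ≤ C · r^{−1/2} (log₂ r)². -/

import Mathlib

open Finset

/-- The doubly exponentially growing sequence `r_i = r^(2^(i-1))`, so that
`r_1 = r` and `r_{i+1} = r_i²`. -/
noncomputable def rseq (r : ℝ) (i : ℕ) : ℝ := r ^ 2 ^ (i - 1)

-- nat lemma 1: 8*(k+1) ≤ 29 + 2^k
lemma aux_nat1 (k : ℕ) : 8*(k+1) ≤ 29 + 2^k := by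
  induction k with
  | zero => norm_num
  | succ n ih =>
    rcases le_or_gt 3 n with h | h
    · have h8 : (8:ℕ) ≤ 2^n := by
        calc (8:ℕ) = 2^3 := by norm_num
        _ ≤ 2^n := Nat.pow_le_pow_right (by norm_num) h
      have : 2^(n+1) = 2^n + 2^n := by ring
      omega
    · interval_cases n <;> norm_num

-- nat lemma 2: i * (2^(i-1))^2 * 2^i ≤ 2^(4*i-2) for i ≥ 1
lemma aux_nat2 (i : ℕ) (hi : 1 ≤ i) : i * (2^(i-1))^2 * 2^i ≤ 2^(4*i-2) := by
  have h1 : i ≤ 2^i := (Nat.lt_two_pow_self (n := i)).le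
  calc i * (2^(i-1))^2 * 2^i ≤ 2^i * (2^(i-1))^2 * 2^i := by
        exact Nat.mul_le_mul_right _ (Nat.mul_le_mul_right _ h1)
  _ = 2^(i + (i-1)*2 + i) := by rw [← pow_mul, ← pow_add, ← pow_add]
  _ = 2^(4*i-2) := by congr 1; omega

lemma term_le (r : ℝ) (hr : 2 ≤ r) (i : ℕ) (hi : 1 ≤ i) :
    (i : ℝ) * rseq r i ^ (-(1 / 2) : ℝ) * (Real.logb 2 (rseq r i)) ^ 2 ≤
      8192 * (1/2 : ℝ)^i * (r ^ (-(1 / 2) : ℝ) * (Real.logb 2 r) ^ 2) := by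
  have hr0 : (0:ℝ) < r := by linarith
  set n : ℕ := 2 ^ (i - 1) with hn
  have hn1 : 1 ≤ n := Nat.one_le_two_pow
  set L : ℝ := Real.logb 2 r with hL
  set a : ℝ := ((n:ℝ) - 1) / 2 with ha
  have ha0 : 0 ≤ a := by
    have h1n : (1:ℝ) ≤ n := by exact_mod_cast hn1
    have : (0:ℝ) ≤ (n:ℝ) - 1 := by linarith
    exact div_nonneg this (by norm_num)
  -- rewrite rseq pieces
  have hlogb : Real.logb 2 (rseq r i) = (n:ℝ) * L := by
    rw [rseq, ← hn, Real.logb_pow]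
  have hrpow : rseq r i ^ (-(1 / 2) : ℝ) = r ^ (-(1/2):ℝ) * r ^ (-a) := by
    rw [rseq, ← hn, ← Real.rpow_natCast r n, ← Real.rpow_mul hr0.le,
      ← Real.rpow_add hr0]
    congr 1
    field_simp [ha]
    ring
  rw [hlogb, hrpow]
  have hL0 : 0 ≤ L ^ 2 := sq_nonneg _
  have hrhalf : 0 ≤ r ^ (-(1/2):ℝ) := (Real.rpow_pos_of_pos hr0 _).le
  -- key: i * n^2 * r^(-a) ≤ 8192 * (1/2)^i
  have key : (i:ℝ) * (n:ℝ)^2 * r ^ (-a) ≤ 8192 * (1/2:ℝ)^i := by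
    have h2a : (2:ℝ) ^ a ≤ r ^ a := Real.rpow_le_rpow (by norm_num) hr ha0
    have h2apos : (0:ℝ) < (2:ℝ) ^ a := Real.rpow_pos_of_pos (by norm_num) _
    have hra : r ^ (-a) ≤ (2:ℝ) ^ (-a) := by
      rw [Real.rpow_neg hr0.le, Real.rpow_neg (by norm_num : (0:ℝ) ≤ 2)]
      exact inv_anti₀ h2apos h2a
    have step1 : (i:ℝ) * (n:ℝ)^2 * r ^ (-a) ≤ (i:ℝ) * (n:ℝ)^2 * (2:ℝ) ^ (-a) := by
      apply mul_le_mul_of_nonneg_left hra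
      positivity
    refine step1.trans ?_
    -- now show i * n^2 * 2^(-a) ≤ 8192 * (1/2)^i
    have hkey2 : (i:ℝ) * (n:ℝ)^2 * (2:ℝ)^i ≤ 8192 * (2:ℝ) ^ a := by
      have hnat := aux_nat2 i hi
      have hcast : (i:ℝ) * (n:ℝ)^2 * (2:ℝ)^i ≤ (2:ℝ)^(4*i-2 : ℕ) := by
        exact_mod_cast Nat.cast_le.mpr hnat
      refine hcast.trans ?_
      have : ((2:ℝ))^(4*i-2 : ℕ) = (2:ℝ) ^ ((4*i-2 : ℕ) : ℝ) := by
        rw [Real.rpow_natCast]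
      rw [this]
      have h8192 : (8192:ℝ) = (2:ℝ) ^ (13:ℝ) := by
        rw [show (13:ℝ) = ((13:ℕ):ℝ) by norm_num, Real.rpow_natCast]; norm_num
      rw [h8192, ← Real.rpow_add (by norm_num : (0:ℝ) < 2)]
      apply Real.rpow_le_rpow_of_exponent_le one_le_two
      have hn29 : 8 * i ≤ 29 + n := by
        have := aux_nat1 (i - 1)
        have : 8 * i ≤ 29 + 2 ^ (i-1) := by omega
        omega
      have : (8 * i : ℝ) ≤ 29 + (n:ℝ) := by exact_mod_cast hn29
      have hc : ((4*i-2 : ℕ) : ℝ) = 4 * (i:ℝ) - 2 := by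
        have : 2 ≤ 4 * i := by omega
        push_cast [Nat.cast_sub this]
        ring
      rw [hc, ha]
      linarith
    have h2ipos : (0:ℝ) < (2:ℝ)^i := by positivity
    rw [Real.rpow_neg (by norm_num : (0:ℝ) ≤ 2), ← div_eq_mul_inv,
      div_le_iff₀ h2apos]
    have h3 : (i:ℝ) * (n:ℝ)^2 ≤ 8192 * (2:ℝ)^a / (2:ℝ)^i :=
      (le_div_iff₀ h2ipos).mpr hkey2
    calc (i:ℝ)*(n:ℝ)^2 ≤ 8192 * (2:ℝ)^a / (2:ℝ)^i := h3
    _ = 8192 * (1/2:ℝ)^i * (2:ℝ)^a := by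
        rw [show (1/2:ℝ)^i = ((2:ℝ)^i)⁻¹ by rw [one_div, inv_pow],
          div_eq_mul_inv]
        ring
  calc (i:ℝ) * (r ^ (-(1/2):ℝ) * r ^ (-a)) * ((n:ℝ) * L)^2
      = ((i:ℝ) * (n:ℝ)^2 * r ^ (-a)) * (r ^ (-(1/2):ℝ) * L^2) := by ring
  _ ≤ (8192 * (1/2:ℝ)^i) * (r ^ (-(1/2):ℝ) * L^2) := by
      apply mul_le_mul_of_nonneg_right key
      positivity
  _ = 8192 * (1/2:ℝ)^i * (r ^ (-(1/2):ℝ) * L ^ 2) := by ring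

lemma geo_sum (N : ℕ) : ∑ i ∈ Finset.Icc 1 N, (1/2:ℝ)^i = 1 - (1/2)^N := by
  induction N with
  | zero => simp
  | succ n ih =>
    rw [Finset.sum_Icc_succ_top (by omega : 1 ≤ n + 1), ih, pow_succ]
    ring


/-- The sum `∑_{i=1}^{N} i · r_i^{-1/2} (log₂ r_i)²` over the doubly
exponentially growing sequence `r_i = r^(2^(i-1))` is at most
`C · r^{-1/2} (log₂ r)²` for a universal constant `C`. -/
theorem sum_mul_rpow_neg_half_mul_sq_logb_le :
    ∃ C : ℝ, 0 < C ∧ ∀ r : ℝ, 2 ≤ r → ∀ N : ℕ, 1 ≤ N →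
      ∑ i ∈ Finset.Icc 1 N,
          (i : ℝ) * rseq r i ^ (-(1 / 2) : ℝ) * (Real.logb 2 (rseq r i)) ^ 2 ≤
        C * r ^ (-(1 / 2) : ℝ) * (Real.logb 2 r) ^ 2 := by
  refine ⟨8192, by norm_num, fun r hr N _ => ?_⟩
  calc ∑ i ∈ Finset.Icc 1 N,
          (i : ℝ) * rseq r i ^ (-(1 / 2) : ℝ) * (Real.logb 2 (rseq r i)) ^ 2
      ≤ ∑ i ∈ Finset.Icc 1 N,
          8192 * (1/2:ℝ)^i * (r ^ (-(1 / 2) : ℝ) * (Real.logb 2 r) ^ 2) := by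
        apply Finset.sum_le_sum
        intro i hi
        exact term_le r hr i (Finset.mem_Icc.mp hi).1
  _ = (∑ i ∈ Finset.Icc 1 N, (1/2:ℝ)^i) * (8192 * (r ^ (-(1 / 2) : ℝ) * (Real.logb 2 r) ^ 2)) := by
        rw [Finset.sum_mul]
        apply Finset.sum_congr rfl
        intro i _
        ring
  _ ≤ 1 * (8192 * (r ^ (-(1 / 2) : ℝ) * (Real.logb 2 r) ^ 2)) := by
        apply mul_le_mul_of_nonneg_right
        · rw [geo_sum]
          have : (0:ℝ) ≤ (1/2:ℝ)^N := by positivity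
          linarith
        · have hr0 : (0:ℝ) < r := by linarith
          positivity
  _ = 8192 * r ^ (-(1 / 2) : ℝ) * (Real.logb 2 r) ^ 2 := by ring
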